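/- With T₁(n), N(n) defined by T₁(0) = N(0) = 1, T₁(n) = y·T₁(n-1)² + 2·T₁(n-1)·N(n-1) + (x-1)·N(n-1)², N(n) = 2·T₁(n-1)·N(n-1) + (x-1)·N(n-1)², the chromatic polynomial of the Farey graph G_n equals λ·(1−λ)·(2−λ)^{2^n − 1}; equivalently, (T₁(n) + (x−1)N(n)) evaluated at (x,y) = (1−λ, 0), multiplied by (−1)^{2^n}·λ, equals λ(1−λ)(2−λ)^{2^n−1}. -/
import Mathlib


open Polynomial

/-- With the Farey graph Tutte recursion in `ℤ[x][y]` (`y = X` outer, `x = C X` inner):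
`T₁ 0 = N 0 = 1`, `T₁ (n+1) = y·T₁ n² + 2·T₁ n·N n + (x-1)·N n²`,
`N (n+1) = 2·T₁ n·N n + (x-1)·N n²`.  For `n ≥ 1`, the chromatic polynomial of the Farey
graph `G_n` equals `λ(1-λ)(2-λ)^(2^n-1)`: substituting `(x,y) = (1-λ, 0)` into
`T n = T₁ n + (x-1)·N n` and multiplying by `(-1)^(2^n)·λ` gives
`λ·(1-λ)·(2-λ)^(2^n-1)` (as a polynomial identity in `λ`). -/
theorem farey_chromatic_polynomial
    (T₁ N : ℕ → Polynomial (Polynomial ℤ))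
    (h10 : T₁ 0 = 1) (hN0 : N 0 = 1)
    (h1 : ∀ n, T₁ (n + 1) =
      X * (T₁ n) ^ 2 + 2 * T₁ n * N n + (C X - 1) * (N n) ^ 2)
    (hN : ∀ n, N (n + 1) = 2 * T₁ n * N n + (C X - 1) * (N n) ^ 2) :
    ∀ n, 1 ≤ n →
      (-1 : Polynomial ℤ) ^ (2 ^ n) * X *
          (((T₁ n + (C X - 1) * N n).eval 0).comp (1 - X)) =
        X * (1 - X) * (2 - X) ^ (2 ^ n - 1) := by
  -- key: for n ≥ 1, (N n).eval 0 = (X+1)^(2^n-1) and (T₁ n).eval 0 = (N n).eval 0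
  have key : ∀ n, (N (n+1)).eval 0 = (X + 1 : Polynomial ℤ) ^ (2 ^ (n+1) - 1) ∧
      (T₁ (n+1)).eval 0 = (N (n+1)).eval 0 := by
    intro n
    induction n with
    | zero =>
      constructor
      · rw [hN 0, h10, hN0]
        simp [eval_mul, eval_add, eval_sub, eval_pow]
        ring
      · rw [h1 0, hN 0, h10, hN0]
        simp [eval_mul, eval_add, eval_sub, eval_pow]
    | succ m ih =>
      obtain ⟨hNe, hTe⟩ := ih
      have hstep : (N (m+2)).eval 0 = (X + 1 : Polynomial ℤ) ^ (2 ^ (m+2) - 1) := by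
        rw [hN (m+1)]
        simp only [eval_mul, eval_add, eval_sub, eval_pow, eval_ofNat, eval_C, eval_one]
        rw [hTe, hNe]
        rw [show (2:ℕ) ^ (m+2) - 1 = (2 ^ (m+1) - 1) + (2 ^ (m+1) - 1) + 1 by
          have e1 : (2:ℕ) ^ (m+2) = 2 * 2 ^ (m+1) := by ring
          have : 1 ≤ 2 ^ (m+1) := Nat.one_le_two_pow
          omega]
        ring
      refine ⟨hstep, ?_⟩
      rw [h1 (m+1), hN (m+1)]
      simp [eval_mul, eval_add, eval_sub, eval_pow]
  intro n' hn
  obtain ⟨n, rfl⟩ : ∃ m, n' = m + 1 := ⟨n' - 1, by omega⟩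
  obtain ⟨hNe, hTe⟩ := key n
  have heval : (T₁ (n+1) + (C X - 1) * N (n+1)).eval 0
      = X * (X + 1 : Polynomial ℤ) ^ (2 ^ (n+1) - 1) := by
    simp only [eval_add, eval_mul, eval_sub, eval_C, eval_one, hTe, hNe]
    ring
  rw [heval]
  have hneg : ((-1 : Polynomial ℤ)) ^ (2 ^ (n+1)) = 1 :=
    Even.neg_one_pow (by simpa using Nat.even_pow.mpr ⟨even_two, by omega⟩)
  rw [hneg, one_mul]
  simp only [mul_comp, pow_comp, add_comp, X_comp, one_comp]
  ring_nf
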